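/- Let G be a graph on vertex set {1,...,n} with fractional chromatic number χ_f(G). Then every QTF f : {-1,1}^n → {-1,1} supported on G satisfies I[f] ≤ √(χ_f(G)) · √n. -/

import Mathlib

open Finset
open scoped Classical

noncomputable section

/-- The Boolean cube `{-1,1}^V` as a finset of functions `V → ℤ`. -/
def cube (V : Type*) [Fintype V] [DecidableEq V] : Finset (V → ℤ) :=
  Fintype.piFinset fun _ => ({-1, 1} : Finset ℤ)

/-- Negate the `i`-th coordinate. -/
def flipAt {V : Type*} [DecidableEq V] (x : V → ℤ) (i : V) : V → ℤ :=
  Function.update x i (-(x i))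

/-- Influence of coordinate `i` on `f`: the probability over a uniform point of the cube
that flipping coordinate `i` changes the value of `f`. -/
def coordInf {V : Type*} [Fintype V] [DecidableEq V] {α : Type*} (f : (V → ℤ) → α) (i : V) : ℝ :=
  (∑ x ∈ cube V, if f x ≠ f (flipAt x i) then (1 : ℝ) else 0) / (cube V).card

/-- Total influence of `f`. -/
def totalInf {V : Type*} [Fintype V] [DecidableEq V] {α : Type*} (f : (V → ℤ) → α) : ℝ :=
  ∑ i : V, coordInf f i

/-- Sign function, with `sgn 0 = 0`. -/
def sgn (t : ℝ) : ℤ := if 0 < t then 1 else if t < 0 then -1 else 0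

/-- A quadratic multilinear polynomial `∑_{i<j} a_{ij} x_i x_j + ∑_i b_i x_i + c`. -/
def quadPoly {V : Type*} [Fintype V] [LinearOrder V] (a : V → V → ℝ) (b : V → ℝ) (c : ℝ)
    (x : V → ℤ) : ℝ :=
  (∑ i : V, ∑ j : V, if i < j then a i j * x i * x j else 0) + (∑ i : V, b i * x i) + c

/-- `f` is a QTF supported on the graph `G`: it has a quadratic representation whose
cross terms only involve edges of `G`, and whose polynomial is nonvanishing on the cube. -/
def IsQTFSupportedOn {V : Type*} [Fintype V] [LinearOrder V] (G : SimpleGraph V)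
    (f : (V → ℤ) → ℤ) : Prop :=
  ∃ a b c, (∀ i j : V, i < j → a i j ≠ 0 → G.Adj i j) ∧
    (∀ x ∈ cube V, quadPoly a b c x ≠ 0) ∧
    (∀ x ∈ cube V, f x = sgn (quadPoly a b c x))

/-- The fractional chromatic number of `G`: the optimal value of the fractional covering LP
over independent sets. -/
def fracChromNum {n : ℕ} (G : SimpleGraph (Fin n)) : ℝ :=
  sInf {r : ℝ | ∃ w : Finset (Fin n) → ℝ, (∀ S, 0 ≤ w S) ∧
    (∀ S, w S ≠ 0 → ∀ i ∈ S, ∀ j ∈ S, ¬G.Adj i j) ∧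
    (∀ v : Fin n, 1 ≤ ∑ S : Finset (Fin n), if v ∈ S then w S else 0) ∧
    r = ∑ S : Finset (Fin n), w S}
namespace QTF
set_option linter.unusedSectionVars false

variable {V : Type*} [Fintype V] [DecidableEq V]

lemma mem_cube {x : V → ℤ} : x ∈ cube V ↔ ∀ i, x i = -1 ∨ x i = 1 := by
  simp [cube, Fintype.mem_piFinset]

lemma cube_card_pos : 0 < (cube V).card := by
  refine Finset.card_pos.2 ⟨fun _ => 1, ?_⟩
  simp [mem_cube]

lemma flipAt_same (x : V → ℤ) (i : V) : flipAt x i i = -(x i) := by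
  simp [flipAt]

lemma flipAt_ne (x : V → ℤ) {i j : V} (h : j ≠ i) : flipAt x i j = x j := by
  simp [flipAt, Function.update_of_ne h]

lemma flipAt_mem {x : V → ℤ} (hx : x ∈ cube V) (i : V) : flipAt x i ∈ cube V := by
  rw [mem_cube] at hx ⊢
  intro j
  by_cases h : j = i
  · subst h; rw [flipAt_same]; rcases hx j with h | h <;> simp [h]
  · rw [flipAt_ne _ h]; exact hx j

lemma flipAt_flipAt (x : V → ℤ) (i : V) : flipAt (flipAt x i) i = x := by
  funext j
  by_cases h : j = i
  · subst h; rw [flipAt_same, flipAt_same, neg_neg]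
  · rw [flipAt_ne _ h, flipAt_ne _ h]

lemma sum_flip (F : (V → ℤ) → ℝ) (i : V) :
    ∑ x ∈ cube V, F (flipAt x i) = ∑ x ∈ cube V, F x := by
  refine Finset.sum_nbij' (fun x => flipAt x i) (fun x => flipAt x i) ?_ ?_ ?_ ?_ ?_
  · intro x hx; exact flipAt_mem hx i
  · intro x hx; exact flipAt_mem hx i
  · intro x _; exact flipAt_flipAt x i
  · intro x _; exact flipAt_flipAt x i
  · intro x _; rfl

lemma cube_sq {x : V → ℤ} (hx : x ∈ cube V) (i : V) : (x i : ℝ) * x i = 1 := by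
  rcases mem_cube.1 hx i with h | h <;> rw [h] <;> norm_num

end QTF
namespace QTF
set_option linter.unusedSectionVars false
set_option maxHeartbeats 1000000

variable {V : Type*} [Fintype V] [LinearOrder V] [DecidableEq V]

def coef (a : V → V → ℝ) (i j : V) : ℝ :=
  if i < j then a i j else if j < i then a j i else 0

lemma coef_symm (a : V → V → ℝ) (i j : V) : coef a i j = coef a j i := by
  unfold coef
  rcases lt_trichotomy i j with h | h | h
  · rw [if_pos h, if_neg (not_lt_of_gt h), if_pos h]
  · simp [h]
  · rw [if_neg (not_lt_of_gt h), if_pos h, if_pos h]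

lemma coef_self (a : V → V → ℝ) (i : V) : coef a i i = 0 := by simp [coef]

def L (a : V → V → ℝ) (b : V → ℝ) (i : V) (x : V → ℤ) : ℝ :=
  b i + ∑ j, coef a i j * x j

lemma L_flip (a : V → V → ℝ) (b : V → ℝ) (i k : V) (x : V → ℤ) :
    L a b i (flipAt x k) = L a b i x - 2 * coef a i k * x k := by
  unfold L
  have : ∀ j : V, coef a i j * ((flipAt x k) j : ℝ)
      = coef a i j * x j - (if j = k then 2 * coef a i k * x k else 0) := by
    intro j
    by_cases h : j = k
    · subst h; rw [flipAt_same]; push_cast; ring_nf; simp [if_pos rfl]; ring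
    · rw [flipAt_ne _ h, if_neg h, sub_zero]
  rw [Finset.sum_congr rfl fun j _ => this j, Finset.sum_sub_distrib,
    Finset.sum_ite_eq' Finset.univ k]
  simp; ring

lemma quadPoly_flip (a : V → V → ℝ) (b : V → ℝ) (c : ℝ) (i : V) (x : V → ℤ) :
    quadPoly a b c (flipAt x i) = quadPoly a b c x - 2 * (x i : ℝ) * L a b i x := by
  unfold quadPoly L
  set y := flipAt x i with hy
  have hyi : (y i : ℝ) = -(x i : ℝ) := by rw [hy, flipAt_same]; push_cast; ring
  have hyj : ∀ j : V, j ≠ i → (y j : ℝ) = x j := by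
    intro j h; rw [hy, flipAt_ne _ h]
  have key : ∀ i' j' : V,
      (if i' < j' then a i' j' * y i' * y j' else 0)
      = (if i' < j' then a i' j' * x i' * x j' else 0)
        - ((if i' = i then (if i < j' then 2 * a i j' * x i * x j' else 0) else 0)
          + (if j' = i then (if i' < i then 2 * a i' i * x i' * x i else 0) else 0)) := by
    intro i' j'
    have e1 : (y i' : ℝ) = (if i' = i then (-(x i' : ℝ)) else (x i' : ℝ)) := by
      split_ifs with h
      · subst h; exact hyi
      · exact hyj _ h
    have e2 : (y j' : ℝ) = (if j' = i then (-(x j' : ℝ)) else (x j' : ℝ)) := by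
      split_ifs with h
      · subst h; exact hyi
      · exact hyj _ h
    rw [e1, e2]
    split_ifs <;> subst_vars
    any_goals ring
    all_goals exfalso
    all_goals first
      | exact ‹¬ _ < _› ‹_ < _›
      | exact lt_irrefl _ ‹_›
  have hb : ∀ k : V, b k * (y k : ℝ) = b k * x k - (if k = i then 2 * b i * x i else 0) := by
    intro k
    by_cases h : k = i
    · subst h; rw [hyi, if_pos rfl]; ring
    · rw [hyj k h, if_neg h, sub_zero]
  have key2 : ∀ i' : V, ∑ j' : V, (if i' = i then (if i < j' then 2 * a i j' * (x i : ℝ) * x j' else 0) else 0)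
      = (if i' = i then (∑ j' : V, if i < j' then 2 * a i j' * (x i : ℝ) * x j' else 0) else 0) := by
    intro i'
    split_ifs with h
    · rfl
    · simp
  rw [Finset.sum_congr rfl fun i' _ => (Finset.sum_congr rfl fun j' _ => key i' j'),
    Finset.sum_congr rfl fun k _ => hb k]
  simp only [Finset.sum_sub_distrib, Finset.sum_add_distrib]
  rw [Finset.sum_congr rfl fun i' _ => key2 i',
    Finset.sum_ite_eq' Finset.univ i, if_pos (Finset.mem_univ i),
    Finset.sum_congr rfl fun i' (_ : i' ∈ Finset.univ) =>
      (Finset.sum_ite_eq' Finset.univ i (fun _ => if i' < i then 2 * a i' i * (x i' : ℝ) * x i else 0)),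
    Finset.sum_ite_eq' Finset.univ i, if_pos (Finset.mem_univ i)]
  simp only [if_pos (Finset.mem_univ i)]
  have final : (∑ j' : V, if i < j' then 2 * a i j' * (x i : ℝ) * x j' else 0)
      + (∑ i' : V, if i' < i then 2 * a i' i * (x i' : ℝ) * x i else 0)
      = ∑ j : V, 2 * (x i : ℝ) * (coef a i j * x j) := by
    rw [← Finset.sum_add_distrib]
    refine Finset.sum_congr rfl fun j _ => ?_
    unfold coef
    rcases lt_trichotomy i j with h | h | h
    · simp only [if_pos h, if_neg (not_lt_of_gt h)]; ring
    · subst h; simp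
    · simp only [if_neg (not_lt_of_gt h), if_pos h]; ring
  have expand : (2:ℝ) * (x i : ℝ) * (b i + ∑ j : V, coef a i j * x j)
      = 2 * b i * (x i : ℝ) + ∑ j : V, 2 * (x i : ℝ) * (coef a i j * x j) := by
    rw [mul_add, Finset.mul_sum]
    congr 1
    ring
  linarith [final, expand]
end QTF
namespace QTF
set_option linter.unusedSectionVars false
set_option maxHeartbeats 1000000

variable {V : Type*} [Fintype V] [LinearOrder V] [DecidableEq V]

lemma sgn_cast_sq_le_one (t : ℝ) : ((sgn t : ℤ) : ℝ) * ((sgn t : ℤ) : ℝ) ≤ 1 := by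
  unfold sgn
  split_ifs <;> norm_num

lemma sgn_pos {t : ℝ} (h : 0 < t) : sgn t = 1 := by simp [sgn, h]

lemma sgn_neg' {t : ℝ} (h : t < 0) : sgn t = -1 := by
  simp [sgn, h, not_lt_of_gt h, asymm h]

lemma sgn_ne_zero_cases {t : ℝ} (h : t ≠ 0) : sgn t = 1 ∨ sgn t = -1 := by
  rcases lt_trichotomy t 0 with h1 | h1 | h1
  · right; exact sgn_neg' h1
  · exact absurd h1 h
  · left; exact sgn_pos h1

/-- The "directional sign" function. -/
def g (a : V → V → ℝ) (b : V → ℝ) (i : V) (x : V → ℤ) : ℝ :=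
  ((sgn (L a b i x) : ℤ) : ℝ) * (x i : ℝ)

lemma g_flip_self (a : V → V → ℝ) (b : V → ℝ) (i : V) (x : V → ℤ) :
    g a b i (flipAt x i) = -(g a b i x) := by
  unfold g
  rw [L_flip, coef_self, flipAt_same]
  push_cast
  ring

lemma g_flip_other (a : V → V → ℝ) (b : V → ℝ) {i j : V} (hij : j ≠ i)
    (hc : coef a j i = 0) (x : V → ℤ) :
    g a b j (flipAt x i) = g a b j x := by
  unfold g
  rw [L_flip, hc, flipAt_ne _ hij]
  ring_nf

/-- The key influence identity for QTFs. -/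
lemma infl_id (f : (V → ℤ) → ℤ) (a : V → V → ℝ) (b : V → ℝ) (c : ℝ)
    (hnz : ∀ x ∈ cube V, quadPoly a b c x ≠ 0)
    (hsgn : ∀ x ∈ cube V, f x = sgn (quadPoly a b c x)) (i : V) :
    coordInf f i = (∑ x ∈ cube V, (f x : ℝ) * g a b i x) / ((cube V).card : ℝ) := by
  unfold coordInf
  congr 1
  have step1 : ∀ x ∈ cube V,
      (@ite ℝ (f x ≠ f (flipAt x i)) (@instDecidableNot _ (Classical.propDecidable _)) 1 0)
        = (((f x : ℝ) - (f (flipAt x i) : ℝ))/2) * g a b i x := by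
    intro x hx
    by_cases h : f x = f (flipAt x i)
    · rw [if_neg (by simpa using h), h]
      ring
    · rw [if_pos h]
      have hx' : flipAt x i ∈ cube V := flipAt_mem hx i
      have hp : quadPoly a b c x ≠ 0 := hnz x hx
      have hq : quadPoly a b c (flipAt x i) ≠ 0 := hnz _ hx'
      have hfx : f x = sgn (quadPoly a b c x) := hsgn x hx
      have hfy : f (flipAt x i) = sgn (quadPoly a b c (flipAt x i)) := hsgn _ hx'
      have hflip := quadPoly_flip a b c i x
      set p := quadPoly a b c x with hpdef
      set q := quadPoly a b c (flipAt x i) with hqdef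
      have hxi : (x i : ℝ) = 1 ∨ (x i : ℝ) = -1 := by
        rcases mem_cube.1 hx i with h' | h' <;> rw [h'] <;> norm_num
      unfold g
      rcases lt_trichotomy p 0 with hp1 | hp1 | hp1
      · -- p < 0, so sgn p = -1, f x = -1, so sgn q ≠ -1, q > 0
        have hfx1 : f x = -1 := by rw [hfx, sgn_neg' hp1]
        have hq1 : 0 < q := by
          rcases lt_trichotomy q 0 with h2 | h2 | h2
          · exact absurd (by rw [hfx1, hfy, sgn_neg' h2] : f x = f (flipAt x i)) h
          · exact absurd h2 hq
          · exact h2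
        have hfy1 : f (flipAt x i) = 1 := by rw [hfy, sgn_pos hq1]
        have hLx : 2 * (x i : ℝ) * L a b i x < 0 := by
          rw [hflip] at hq1; linarith
        rcases hxi with h3 | h3
        · have hL : L a b i x < 0 := by nlinarith
          rw [sgn_neg' hL, hfx1, hfy1, h3]; norm_num
        · have hL : 0 < L a b i x := by nlinarith
          rw [sgn_pos hL, hfx1, hfy1, h3]; norm_num
      · exact absurd hp1 hp
      · have hfx1 : f x = 1 := by rw [hfx, sgn_pos hp1]
        have hq1 : q < 0 := by
          rcases lt_trichotomy q 0 with h2 | h2 | h2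
          · exact h2
          · exact absurd h2 hq
          · exact absurd (by rw [hfx1, hfy, sgn_pos h2] : f x = f (flipAt x i)) h
        have hfy1 : f (flipAt x i) = -1 := by rw [hfy, sgn_neg' hq1]
        have hLx : 0 < 2 * (x i : ℝ) * L a b i x := by
          rw [hflip] at hq1; linarith
        rcases hxi with h3 | h3
        · have hL : 0 < L a b i x := by nlinarith
          rw [sgn_pos hL, hfx1, hfy1, h3]; norm_num
        · have hL : L a b i x < 0 := by nlinarith
          rw [sgn_neg' hL, hfx1, hfy1, h3]; norm_num
  rw [Finset.sum_congr rfl step1]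
  have step2 : ∑ x ∈ cube V, (f (flipAt x i) : ℝ) * g a b i x
      = - ∑ x ∈ cube V, (f x : ℝ) * g a b i x := by
    have h1 := sum_flip (fun x => (f x : ℝ) * g a b i x) i
    have h2 : ∀ x ∈ cube V, (f (flipAt x i) : ℝ) * g a b i (flipAt x i)
        = -((f (flipAt x i) : ℝ) * g a b i x) := by
      intro x _
      rw [g_flip_self]; ring
    rw [Finset.sum_congr rfl h2] at h1
    rw [Finset.sum_neg_distrib] at h1
    linarith [h1]
  have expand : ∀ x : V → ℤ, (((f x : ℝ) - (f (flipAt x i) : ℝ))/2) * g a b i x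
      = ((f x : ℝ) * g a b i x - (f (flipAt x i) : ℝ) * g a b i x) / 2 := by
    intro x; ring
  rw [Finset.sum_congr rfl fun x _ => expand x]
  rw [← Finset.sum_div, Finset.sum_sub_distrib, step2]
  ring

end QTF
namespace QTF
set_option linter.unusedSectionVars false
set_option maxHeartbeats 1000000

variable {V : Type*} [Fintype V] [LinearOrder V] [DecidableEq V]

lemma orth (a : V → V → ℝ) (b : V → ℝ) {i j : V} (hji : j ≠ i) (hc : coef a j i = 0) :
    ∑ x ∈ cube V, g a b i x * g a b j x = 0 := by
  have h1 := sum_flip (fun x => g a b i x * g a b j x) i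
  have h2 : ∀ x ∈ cube V, g a b i (flipAt x i) * g a b j (flipAt x i)
      = -(g a b i x * g a b j x) := by
    intro x _
    rw [g_flip_self, g_flip_other a b hji hc]
    ring
  rw [Finset.sum_congr rfl h2, Finset.sum_neg_distrib] at h1
  linarith

lemma diag (a : V → V → ℝ) (b : V → ℝ) (i : V) :
    ∑ x ∈ cube V, g a b i x * g a b i x ≤ ((cube V).card : ℝ) := by
  calc ∑ x ∈ cube V, g a b i x * g a b i x ≤ ∑ _x ∈ cube V, (1:ℝ) := by
        refine Finset.sum_le_sum fun x hx => ?_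
        unfold g
        have h1 := sgn_cast_sq_le_one (L a b i x)
        have h2 := cube_sq hx i
        nlinarith [sq_nonneg (((sgn (L a b i x) : ℤ) : ℝ))]
    _ = ((cube V).card : ℝ) := by simp

lemma f_sq (f : (V → ℤ) → ℤ) (a : V → V → ℝ) (b : V → ℝ) (c : ℝ)
    (hnz : ∀ x ∈ cube V, quadPoly a b c x ≠ 0)
    (hsgn : ∀ x ∈ cube V, f x = sgn (quadPoly a b c x))
    {x : V → ℤ} (hx : x ∈ cube V) : ((f x : ℝ))^2 = 1 := by
  rcases sgn_ne_zero_cases (hnz x hx) with h | h <;>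
    rw [hsgn x hx, h] <;> norm_num

lemma set_bound (f : (V → ℤ) → ℤ) (a : V → V → ℝ) (b : V → ℝ) (c : ℝ)
    (hnz : ∀ x ∈ cube V, quadPoly a b c x ≠ 0)
    (hsgn : ∀ x ∈ cube V, f x = sgn (quadPoly a b c x))
    (S : Finset V) (hS : ∀ i ∈ S, ∀ j ∈ S, i ≠ j → coef a i j = 0)
    (d : V → ℝ) (hd : ∀ i, 0 < d i) :
    ∑ i ∈ S, coordInf f i / d i ≤ Real.sqrt (∑ i ∈ S, 1 / (d i)^2) := by
  set N : ℝ := ((cube V).card : ℝ) with hNdef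
  have hN : (0:ℝ) < N := by rw [hNdef]; exact_mod_cast (cube_card_pos (V := V))
  have hInf : ∀ i : V, coordInf f i = (∑ x ∈ cube V, (f x : ℝ) * g a b i x) / N := by
    intro i; rw [infl_id f a b c hnz hsgn i, hNdef]
  set Y : (V → ℤ) → ℝ := fun x => ∑ i ∈ S, g a b i x / d i with hY
  have e1 : ∑ x ∈ cube V, (f x : ℝ) * Y x
      = ∑ i ∈ S, (∑ x ∈ cube V, (f x:ℝ) * g a b i x) / d i := by
    simp only [hY, Finset.mul_sum]
    rw [Finset.sum_comm]
    refine Finset.sum_congr rfl fun i _ => ?_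
    rw [Finset.sum_div]
    exact Finset.sum_congr rfl fun x _ => by ring
  have hswap : ∑ i ∈ S, coordInf f i / d i = (∑ x ∈ cube V, (f x : ℝ) * Y x) / N := by
    rw [e1, Finset.sum_div]
    refine Finset.sum_congr rfl fun i _ => ?_
    rw [hInf i]
    ring
  have hfs : ∑ x ∈ cube V, ((f x : ℝ))^2 = N := by
    rw [Finset.sum_congr rfl fun x hx => f_sq f a b c hnz hsgn hx]
    simp [hNdef]
  have hY2 : ∑ x ∈ cube V, (Y x)^2 ≤ N * ∑ i ∈ S, 1/(d i)^2 := by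
    have expand : ∀ x : V → ℤ,
        (Y x)^2 = ∑ i ∈ S, ∑ j ∈ S, (g a b i x * g a b j x)/(d i * d j) := by
      intro x
      rw [sq, hY, Finset.sum_mul_sum]
      exact Finset.sum_congr rfl fun i _ => Finset.sum_congr rfl fun j _ => by ring
    rw [Finset.sum_congr rfl fun x _ => expand x, Finset.sum_comm]
    have inner : ∀ i ∈ S, ∑ x ∈ cube V, ∑ j ∈ S, (g a b i x * g a b j x)/(d i * d j)
        = ∑ j ∈ S, (∑ x ∈ cube V, g a b i x * g a b j x)/(d i * d j) := by
      intro i _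
      rw [Finset.sum_comm]
      exact Finset.sum_congr rfl fun j _ => by rw [Finset.sum_div]
    rw [Finset.sum_congr rfl inner]
    have hdiag : ∀ i ∈ S, ∑ j ∈ S, (∑ x ∈ cube V, g a b i x * g a b j x)/(d i * d j)
        ≤ N / (d i)^2 := by
      intro i hi
      rw [Finset.sum_eq_single_of_mem i hi (fun j hj hji => by
        rw [orth a b hji (hS j hj i hi hji), zero_div])]
      rw [pow_two]
      exact (div_le_div_iff_of_pos_right (mul_pos (hd i) (hd i))).2 (diag a b i)
    calc ∑ i ∈ S, ∑ j ∈ S, (∑ x ∈ cube V, g a b i x * g a b j x) / (d i * d j)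
        ≤ ∑ i ∈ S, N / (d i)^2 := Finset.sum_le_sum hdiag
      _ = N * ∑ i ∈ S, 1/(d i)^2 := by
          rw [Finset.mul_sum]
          exact Finset.sum_congr rfl fun i _ => by ring
  -- Cauchy-Schwarz
  have cs : (∑ x ∈ cube V, (f x : ℝ) * Y x)^2 ≤ N * (N * ∑ i ∈ S, 1/(d i)^2) := by
    calc (∑ x ∈ cube V, (f x : ℝ) * Y x)^2
        ≤ (∑ x ∈ cube V, ((f x : ℝ))^2) * (∑ x ∈ cube V, (Y x)^2) :=
          sum_mul_sq_le_sq_mul_sq (cube V) (fun x => (f x : ℝ)) Y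
      _ ≤ N * (N * ∑ i ∈ S, 1/(d i)^2) := by
          rw [hfs]
          exact mul_le_mul_of_nonneg_left hY2 hN.le
  have hu : (0:ℝ) ≤ ∑ i ∈ S, 1/(d i)^2 :=
    Finset.sum_nonneg fun i _ => by positivity
  rw [hswap]
  have ht2 : ((∑ x ∈ cube V, (f x : ℝ) * Y x) / N)^2 ≤ ∑ i ∈ S, 1/(d i)^2 := by
    rw [div_pow, div_le_iff₀ (by positivity)]
    calc (∑ x ∈ cube V, (f x : ℝ) * Y x)^2 ≤ N * (N * ∑ i ∈ S, 1/(d i)^2) := cs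
      _ = (∑ i ∈ S, 1/(d i)^2) * N^2 := by ring
  calc (∑ x ∈ cube V, (f x : ℝ) * Y x) / N
      ≤ |(∑ x ∈ cube V, (f x : ℝ) * Y x) / N| := le_abs_self _
    _ = Real.sqrt (((∑ x ∈ cube V, (f x : ℝ) * Y x) / N)^2) :=
        (Real.sqrt_sq_eq_abs _).symm
    _ ≤ Real.sqrt (∑ i ∈ S, 1/(d i)^2) := Real.sqrt_le_sqrt ht2
end QTF
namespace QTF
set_option linter.unusedSectionVars false
set_option maxHeartbeats 1000000

section irrel
variable {V : Type*} [Fintype V]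

lemma cube_irrel (i1 i2 : DecidableEq V) : @cube V _ i1 = @cube V _ i2 := by
  congr!

lemma flipAt_irrel (i1 i2 : DecidableEq V) (x : V → ℤ) (i : V) :
    @flipAt V i1 x i = @flipAt V i2 x i := by
  funext j
  by_cases h : j = i
  · subst h
    rw [@flipAt_same V _ i1 x j, @flipAt_same V _ i2 x j]
  · rw [@flipAt_ne V _ i1 x i j h, @flipAt_ne V _ i2 x i j h]

lemma coordInf_irrel (i1 i2 : DecidableEq V) (f : (V → ℤ) → ℤ) (i : V) :
    @coordInf V _ i1 ℤ f i = @coordInf V _ i2 ℤ f i := by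
  unfold coordInf
  rw [cube_irrel i1 i2]
  congr 1
  refine Finset.sum_congr rfl fun x _ => ?_
  rw [flipAt_irrel i1 i2]

lemma coordInf_nonneg (i1 : DecidableEq V) (f : (V → ℤ) → ℤ) (i : V) :
    0 ≤ @coordInf V _ i1 ℤ f i := by
  unfold coordInf
  refine div_nonneg (Finset.sum_nonneg fun x _ => ?_) (Nat.cast_nonneg _)
  split_ifs <;> norm_num

end irrel
end QTF
namespace QTF
set_option linter.unusedSectionVars false
set_option maxHeartbeats 1000000

lemma main_bound {n : ℕ} (G : SimpleGraph (Fin n)) (f : (Fin n → ℤ) → ℤ)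
    (a : Fin n → Fin n → ℝ) (b : Fin n → ℝ) (c : ℝ)
    (hsupp : ∀ i j : Fin n, i < j → a i j ≠ 0 → G.Adj i j)
    (hnz : ∀ x ∈ cube (Fin n), quadPoly a b c x ≠ 0)
    (hsgn : ∀ x ∈ cube (Fin n), f x = sgn (quadPoly a b c x))
    (w : Finset (Fin n) → ℝ) (hw0 : ∀ S, 0 ≤ w S)
    (hind : ∀ S, w S ≠ 0 → ∀ i ∈ S, ∀ j ∈ S, ¬G.Adj i j)
    (hcov : ∀ v : Fin n, 1 ≤ ∑ S : Finset (Fin n), if v ∈ S then w S else 0) :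
    totalInf f ≤ Real.sqrt (∑ S : Finset (Fin n), w S) * Real.sqrt n := by
  set cc : Fin n → ℝ := fun i => ∑ S : Finset (Fin n), if i ∈ S then w S else 0 with hcc
  have hc1 : ∀ i, 1 ≤ cc i := hcov
  have hcpos : ∀ i, 0 < cc i := fun i => lt_of_lt_of_le zero_lt_one (hc1 i)
  have hcne : ∀ i, cc i ≠ 0 := fun i => (hcpos i).ne'
  set u : Finset (Fin n) → ℝ := fun S => ∑ i ∈ S, 1/(cc i)^2 with hu
  have hu0 : ∀ S, 0 ≤ u S := fun S => Finset.sum_nonneg fun i _ => by positivity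
  have stepA : totalInf f = ∑ S : Finset (Fin n), w S * ∑ i ∈ S, coordInf f i / cc i := by
    unfold totalInf
    calc ∑ i : Fin n, coordInf f i
        = ∑ i : Fin n, (coordInf f i / cc i) * cc i := by
          refine Finset.sum_congr rfl fun i _ => (div_mul_cancel₀ _ (hcne i)).symm
      _ = ∑ i : Fin n, ∑ S : Finset (Fin n),
            (if i ∈ S then (coordInf f i / cc i) * w S else 0) := by
          refine Finset.sum_congr rfl fun i _ => ?_
          simp only [hcc]
          rw [Finset.mul_sum]
          refine Finset.sum_congr rfl fun S _ => ?_
          rw [mul_ite, mul_zero]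
      _ = ∑ S : Finset (Fin n), ∑ i : Fin n,
            (if i ∈ S then (coordInf f i / cc i) * w S else 0) := Finset.sum_comm
      _ = ∑ S : Finset (Fin n), w S * ∑ i ∈ S, coordInf f i / cc i := by
          refine Finset.sum_congr rfl fun S _ => ?_
          rw [Finset.sum_ite_mem, Finset.univ_inter, Finset.mul_sum]
          exact Finset.sum_congr rfl fun i _ => by ring
  have indep : ∀ S : Finset (Fin n), w S ≠ 0 → ∀ i ∈ S, ∀ j ∈ S, i ≠ j → coef a i j = 0 := by
    intro S hw i hi j hj hij
    unfold coef
    split_ifs with h1 h2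
    · by_contra hne; exact hind S hw i hi j hj (hsupp i j h1 hne)
    · by_contra hne; exact hind S hw j hj i hi (hsupp j i h2 hne)
    · rfl
  have stepB : ∀ S : Finset (Fin n), w S * ∑ i ∈ S, coordInf f i / cc i
      ≤ w S * Real.sqrt (u S) := by
    intro S
    by_cases hw : w S = 0
    · rw [hw]; simp
    · exact mul_le_mul_of_nonneg_left
        (set_bound f a b c hnz hsgn S (indep S hw) cc hcpos) (hw0 S)
  have stepC : ∑ S : Finset (Fin n), w S * Real.sqrt (u S)
      ≤ Real.sqrt (∑ S : Finset (Fin n), w S)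
        * Real.sqrt (∑ S : Finset (Fin n), w S * u S) := by
    have h := Real.sum_sqrt_mul_sqrt_le (Finset.univ : Finset (Finset (Fin n)))
      (f := w) (g := fun S => w S * u S) hw0 (fun S => mul_nonneg (hw0 S) (hu0 S))
    have e : ∀ S : Finset (Fin n),
        Real.sqrt (w S) * Real.sqrt (w S * u S) = w S * Real.sqrt (u S) := by
      intro S
      rw [Real.sqrt_mul (hw0 S), ← mul_assoc, Real.mul_self_sqrt (hw0 S)]
    rw [Finset.sum_congr rfl fun S _ => e S] at h
    exact h
  have stepD : ∑ S : Finset (Fin n), w S * u S ≤ (n : ℝ) := by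
    have swap : ∑ S : Finset (Fin n), w S * u S
        = ∑ i : Fin n, (1/(cc i)^2) * cc i := by
      calc ∑ S : Finset (Fin n), w S * u S
          = ∑ S : Finset (Fin n), ∑ i : Fin n,
              (if i ∈ S then (1/(cc i)^2) * w S else 0) := by
            refine Finset.sum_congr rfl fun S _ => ?_
            simp only [hu]
            rw [Finset.sum_ite_mem, Finset.univ_inter, Finset.mul_sum]
            exact Finset.sum_congr rfl fun i _ => by ring
        _ = ∑ i : Fin n, ∑ S : Finset (Fin n),
              (if i ∈ S then (1/(cc i)^2) * w S else 0) := Finset.sum_comm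
        _ = ∑ i : Fin n, (1/(cc i)^2) * cc i := by
            refine Finset.sum_congr rfl fun i _ => ?_
            conv_rhs => rw [hcc]
            rw [Finset.mul_sum]
            exact Finset.sum_congr rfl fun S _ => by rw [mul_ite, mul_zero]
    rw [swap]
    calc ∑ i : Fin n, (1/(cc i)^2) * cc i = ∑ i : Fin n, 1 / cc i := by
          refine Finset.sum_congr rfl fun i _ => ?_
          rw [one_div, one_div, pow_two, mul_inv, mul_assoc,
            inv_mul_cancel₀ (hcne i), mul_one]
      _ ≤ ∑ _i : Fin n, (1:ℝ) := Finset.sum_le_sum fun i _ => by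
          rw [div_le_one (hcpos i)]; exact hc1 i
      _ = (n : ℝ) := by simp
  calc totalInf f = ∑ S : Finset (Fin n), w S * ∑ i ∈ S, coordInf f i / cc i := stepA
    _ ≤ ∑ S : Finset (Fin n), w S * Real.sqrt (u S) :=
        Finset.sum_le_sum fun S _ => stepB S
    _ ≤ Real.sqrt (∑ S : Finset (Fin n), w S)
        * Real.sqrt (∑ S : Finset (Fin n), w S * u S) := stepC
    _ ≤ Real.sqrt (∑ S : Finset (Fin n), w S) * Real.sqrt n :=
        mul_le_mul_of_nonneg_left (Real.sqrt_le_sqrt stepD) (Real.sqrt_nonneg _)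

end QTF
set_option maxHeartbeats 1000000 in
/-- Every QTF supported on `G` has total influence at most `√(χ_f(G)) · √n`. -/
theorem qtf_influence_le_sqrt_fracChrom {n : ℕ} (G : SimpleGraph (Fin n))
    (f : (Fin n → ℤ) → ℤ) (hf : IsQTFSupportedOn G f) :
    totalInf f ≤ Real.sqrt (fracChromNum G) * Real.sqrt n := by
  obtain ⟨a, b, c, hsupp, hnz, hsgn⟩ := hf
  have hnz' : ∀ x ∈ cube (Fin n), quadPoly a b c x ≠ 0 := by
    intro x hx
    exact hnz x ((@QTF.mem_cube (Fin n) _ (fun a b => LinearOrder.toDecidableEq a b) x).2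
      ((@QTF.mem_cube (Fin n) _ (instDecidableEqFin n) x).1 hx))
  have hsgn' : ∀ x ∈ cube (Fin n), f x = sgn (quadPoly a b c x) := by
    intro x hx
    exact hsgn x ((@QTF.mem_cube (Fin n) _ (fun a b => LinearOrder.toDecidableEq a b) x).2
      ((@QTF.mem_cube (Fin n) _ (instDecidableEqFin n) x).1 hx))
  set Aset : Set ℝ := {r : ℝ | ∃ w : Finset (Fin n) → ℝ, (∀ S, 0 ≤ w S) ∧
    (∀ S, w S ≠ 0 → ∀ i ∈ S, ∀ j ∈ S, ¬G.Adj i j) ∧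
    (∀ v : Fin n, 1 ≤ ∑ S : Finset (Fin n), if v ∈ S then w S else 0) ∧
    r = ∑ S : Finset (Fin n), w S} with hAdef
  have hfrac : fracChromNum G = sInf Aset := rfl
  have key : ∀ r ∈ Aset, totalInf f ≤ Real.sqrt r * Real.sqrt n := by
    rintro r ⟨w, hw0, hind, hcov, rfl⟩
    exact QTF.main_bound G f a b c hsupp hnz' hsgn' w hw0 hind hcov
  have hne : Aset.Nonempty := by
    refine ⟨∑ S : Finset (Fin n), (if S.card = 1 then (1:ℝ) else 0),
      fun S => if S.card = 1 then (1:ℝ) else 0, ?_, ?_, ?_, rfl⟩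
    · intro S; dsimp only; split_ifs <;> norm_num
    · intro S hw i hi j hj
      have hcard : S.card = 1 := by
        by_contra h
        exact hw (if_neg h)
      have hij : i = j := Finset.card_le_one.1 (le_of_eq hcard) i hi j hj
      subst hij
      exact G.irrefl
    · intro v
      have h1 := Finset.single_le_sum
        (f := fun S : Finset (Fin n) => if v ∈ S then (if S.card = 1 then (1:ℝ) else 0) else 0)
        (fun S _ => by split_ifs <;> norm_num) (Finset.mem_univ ({v} : Finset (Fin n)))
      simpa using h1
  rcases Nat.eq_zero_or_pos n with hn | hn
  · subst hn
    have h0 : totalInf f = 0 := by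
      unfold totalInf
      simp
    rw [h0]
    positivity
  · have hI0 : 0 ≤ totalInf f :=
      Finset.sum_nonneg fun i _ => QTF.coordInf_nonneg _ f i
    have hsn : (0:ℝ) < Real.sqrt n := Real.sqrt_pos.2 (by exact_mod_cast hn)
    have hlow : ∀ r ∈ Aset, (totalInf f / Real.sqrt n)^2 ≤ r := by
      intro r hr
      have h1 := key r hr
      have hr0 : 0 ≤ r := by
        obtain ⟨w, hw0, -, -, rfl⟩ := hr
        exact Finset.sum_nonneg fun S _ => hw0 S
      have h2 : totalInf f / Real.sqrt n ≤ Real.sqrt r := by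
        rw [div_le_iff₀ hsn]; exact h1
      calc (totalInf f / Real.sqrt n)^2 ≤ (Real.sqrt r)^2 :=
            pow_le_pow_left₀ (div_nonneg hI0 hsn.le) h2 2
        _ = r := Real.sq_sqrt hr0
    have hinf : (totalInf f / Real.sqrt n)^2 ≤ sInf Aset := le_csInf hne hlow
    have h3 : totalInf f / Real.sqrt n ≤ Real.sqrt (sInf Aset) := by
      calc totalInf f / Real.sqrt n
          = Real.sqrt ((totalInf f / Real.sqrt n)^2) :=
            (Real.sqrt_sq (div_nonneg hI0 hsn.le)).symm
        _ ≤ _ := Real.sqrt_le_sqrt hinf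
    rw [div_le_iff₀ hsn] at h3
    rw [hfrac]
    exact h3
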